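/- For every natural number r ≥ 0 one has γ^r ∈ J_r; equivalently, the residue class of γ in F_r = ℂ[α,β,γ]/J_r is nilpotent with γ^r = 0 in F_r. -/

import Mathlib

open MvPolynomial

/-- The triple (R¹_r, R²_r, R³_r) of polynomials in ℂ[α,β,γ] (α = X 0, β = X 1, γ = X 2). -/
noncomputable def Rr : ℕ → MvPolynomial (Fin 3) ℂ × MvPolynomial (Fin 3) ℂ × MvPolynomial (Fin 3) ℂ
  | 0 => (1, 0, 0)
  | (r + 1) =>
      (X 0 * (Rr r).1 + C ((r : ℂ) ^ 2) * (Rr r).2.1,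
       (X 1 + C ((-1 : ℂ) ^ (r + 1) * 8)) * (Rr r).1 + C ((2 * r : ℂ) / (r + 1)) * (Rr r).2.2,
       X 2 * (Rr r).1)

/-- The ideal J_r = (R¹_r, R²_r, R³_r) ⊆ ℂ[α,β,γ]. -/
noncomputable def Jr (r : ℕ) : Ideal (MvPolynomial (Fin 3) ℂ) :=
  Ideal.span {(Rr r).1, (Rr r).2.1, (Rr r).2.2}

lemma mem1 (r : ℕ) : (Rr r).1 ∈ Jr r := Ideal.subset_span (by simp)
lemma mem2 (r : ℕ) : (Rr r).2.1 ∈ Jr r := Ideal.subset_span (by simp)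
lemma mem3 (r : ℕ) : (Rr r).2.2 ∈ Jr r := Ideal.subset_span (by simp)

lemma Rr1_succ (m : ℕ) :
    (Rr (m + 1)).1 = X 0 * (Rr m).1 + C ((m : ℂ) ^ 2) * (Rr m).2.1 := by rw [Rr]
lemma Rr2_succ (m : ℕ) :
    (Rr (m + 1)).2.1 = (X 1 + C ((-1 : ℂ) ^ (m + 1) * 8)) * (Rr m).1
      + C ((2 * m : ℂ) / (m + 1)) * (Rr m).2.2 := by rw [Rr]
lemma Rr3_succ (m : ℕ) :
    (Rr (m + 1)).2.2 = X 2 * (Rr m).1 := by rw [Rr]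

/-- cancel a nonzero constant -/
lemma cancelC {d : ℂ} (hd : d ≠ 0) {p : MvPolynomial (Fin 3) ℂ} {J : Ideal (MvPolynomial (Fin 3) ℂ)}
    (h : C d * p ∈ J) : p ∈ J := by
  have h2 := J.mul_mem_left (C d⁻¹) h
  rwa [← mul_assoc, ← C_mul, inv_mul_cancel₀ hd, C_1, one_mul] at h2

lemma castsucc_ne (m : ℕ) : ((m + 1 : ℕ) : ℂ) ≠ 0 :=
  Nat.cast_ne_zero.mpr (Nat.succ_ne_zero m)

lemma key (r : ℕ) : ∀ k s, k + s = r →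
    (X 2 : MvPolynomial (Fin 3) ℂ) ^ k * (Rr s).1 ∈ Jr r ∧
    (X 2 : MvPolynomial (Fin 3) ℂ) ^ k * (Rr s).2.1 ∈ Jr r := by
  intro k
  induction k using Nat.strong_induction_on with
  | _ k ih =>
  match k with
  | 0 =>
    intro s hs
    have : s = r := by omega
    subst this
    simpa using ⟨mem1 s, mem2 s⟩
  | 1 =>
    intro s hs
    have hr : r = s + 1 := by omega
    subst hr
    have hA : (X 2 : MvPolynomial (Fin 3) ℂ) ^ 1 * (Rr s).1 ∈ Jr (s + 1) := by
      have := mem3 (s + 1)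
      rw [Rr3_succ] at this
      simpa [pow_one] using this
    refine ⟨hA, ?_⟩
    match s with
    | 0 =>
      have : (Rr 0).2.1 = 0 := rfl
      rw [this, mul_zero]
      exact (Jr 1).zero_mem
    | m + 1 =>
      have h1 : (X 2 : MvPolynomial (Fin 3) ℂ) * (Rr (m + 1 + 1)).1 ∈ Jr (m + 2) :=
        Ideal.mul_mem_left _ _ (mem1 (m + 2))
      have h2 : (X 0 : MvPolynomial (Fin 3) ℂ) * ((X 2) ^ 1 * (Rr (m + 1)).1) ∈ Jr (m + 2) :=
        Ideal.mul_mem_left _ _ hA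
      have h3 : C (((m + 1 : ℕ) : ℂ) ^ 2) * ((X 2 : MvPolynomial (Fin 3) ℂ) ^ 1 * (Rr (m + 1)).2.1)
          ∈ Jr (m + 2) := by
        have heq : C (((m + 1 : ℕ) : ℂ) ^ 2) * ((X 2 : MvPolynomial (Fin 3) ℂ) ^ 1 * (Rr (m + 1)).2.1)
            = (X 2) * (Rr (m + 1 + 1)).1 - (X 0) * ((X 2) ^ 1 * (Rr (m + 1)).1) := by
          rw [Rr1_succ (m + 1)]
          ring
        rw [heq]
        exact Ideal.sub_mem _ h1 h2
      exact cancelC (pow_ne_zero 2 (castsucc_ne m)) h3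
  | k + 2 =>
    intro s hs
    have hr : r = k + 2 + s := by omega
    subst hr
    obtain ⟨_, hBk⟩ := ih k (by omega) (s + 2) (by omega)
    obtain ⟨hAk1, _⟩ := ih (k + 1) (by omega) (s + 1) (by omega)
    set J := Jr (k + 2 + s) with hJ
    set γ : MvPolynomial (Fin 3) ℂ := X 2 with hγ
    have hd : ((2 * ((s + 1 : ℕ) : ℂ)) / (((s + 1 : ℕ) : ℂ) + 1)) ≠ 0 := by
      apply div_ne_zero (mul_ne_zero two_ne_zero (castsucc_ne s))
      have : (((s + 1 : ℕ) : ℂ) + 1) = ((s + 2 : ℕ) : ℂ) := by push_cast; ring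
      rw [this]
      exact castsucc_ne (s + 1)
    have hA : γ ^ (k + 2) * (Rr s).1 ∈ J := by
      apply cancelC hd
      have h1 : γ * (γ ^ k * (Rr (s + 1 + 1)).2.1) ∈ J := Ideal.mul_mem_left _ _ hBk
      have h2 : (X 1 + C ((-1 : ℂ) ^ (s + 1 + 1) * 8)) * (γ ^ (k + 1) * (Rr (s + 1)).1) ∈ J :=
        Ideal.mul_mem_left _ _ hAk1
      have heq : C ((2 * ((s + 1 : ℕ) : ℂ)) / (((s + 1 : ℕ) : ℂ) + 1)) * (γ ^ (k + 2) * (Rr s).1)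
          = γ * (γ ^ k * (Rr (s + 1 + 1)).2.1)
            - (X 1 + C ((-1 : ℂ) ^ (s + 1 + 1) * 8)) * (γ ^ (k + 1) * (Rr (s + 1)).1) := by
        rw [Rr2_succ (s + 1), Rr3_succ s, hγ]
        ring
      rw [heq]
      exact Ideal.sub_mem _ h1 h2
    refine ⟨hA, ?_⟩
    cases s with
    | zero =>
      have : (Rr 0).2.1 = 0 := rfl
      rw [this, mul_zero]
      exact J.zero_mem
    | succ m =>
      have h1 : γ * (γ ^ (k + 1) * (Rr (m + 1 + 1)).1) ∈ J := Ideal.mul_mem_left _ _ hAk1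
      have h2 : (X 0 : MvPolynomial (Fin 3) ℂ) * (γ ^ (k + 2) * (Rr (m + 1)).1) ∈ J :=
        Ideal.mul_mem_left _ _ hA
      have h3 : C (((m + 1 : ℕ) : ℂ) ^ 2) * (γ ^ (k + 2) * (Rr (m + 1)).2.1) ∈ J := by
        have heq : C (((m + 1 : ℕ) : ℂ) ^ 2) * (γ ^ (k + 2) * (Rr (m + 1)).2.1)
            = γ * (γ ^ (k + 1) * (Rr (m + 1 + 1)).1)
              - (X 0) * (γ ^ (k + 2) * (Rr (m + 1)).1) := by
          rw [Rr1_succ (m + 1)]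
          ring
        rw [heq]
        exact Ideal.sub_mem _ h1 h2
      exact cancelC (pow_ne_zero 2 (castsucc_ne m)) h3

/-- For every r ≥ 0 one has γ^r ∈ J_r; equivalently, the residue class of γ in
F_r = ℂ[α,β,γ]/J_r is nilpotent with γ^r = 0 in F_r. -/
theorem stmt10 (r : ℕ) :
    (X 2 : MvPolynomial (Fin 3) ℂ) ^ r ∈ Jr r ∧
    (Ideal.Quotient.mk (Jr r) (X 2)) ^ r = 0 := by
  have h := (key r r 0 (by omega)).1
  rw [show (Rr 0).1 = 1 from rfl, mul_one] at h
  refine ⟨h, ?_⟩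
  rw [← map_pow, Ideal.Quotient.eq_zero_iff_mem]
  exact h
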